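/- In ℂ² ⊗ ℂ² ⊗ ℂ², define G₁ = span{|001⟩ − |010⟩ − 2|011⟩ − 2|110⟩, |001⟩ − |010⟩ + 2|011⟩ − 2|101⟩, |001⟩ + |010⟩ − |100⟩}, G₂ = span{|000⟩ + |111⟩, |001⟩ + |010⟩ + 2|100⟩, |011⟩ + |101⟩ − |110⟩}, and G₃ = span{|000⟩ − |111⟩, |001⟩ − |010⟩ + |101⟩ + |110⟩}. Then G₁, G₂, G₃ are pairwise orthogonal subspaces of dimensions 3, 3 and 2 respectively, G₃ is a genuinely entangled subspace, and ℂ² ⊗ ℂ² ⊗ ℂ² = G₁ ⊕ G₂ ⊕ G₃ (an orthogonal decomposition of the whole three-qubit space into genuinely entangled subspaces). -/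

import Mathlib

set_option linter.unnecessarySeqFocus false
set_option linter.unreachableTactic false
set_option linter.unusedTactic false

noncomputable section

abbrev TriH (d₁ d₂ d₃ : ℕ) := EuclideanSpace ℂ (Fin d₁ × Fin d₂ × Fin d₃)

def BiprodA {d₁ d₂ d₃ : ℕ} (ψ : TriH d₁ d₂ d₃) : Prop :=
  ∃ (a : Fin d₁ → ℂ) (g : Fin d₂ × Fin d₃ → ℂ), ∀ i j k, ψ (i, j, k) = a i * g (j, k)

def BiprodB {d₁ d₂ d₃ : ℕ} (ψ : TriH d₁ d₂ d₃) : Prop :=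
  ∃ (b : Fin d₂ → ℂ) (g : Fin d₁ × Fin d₃ → ℂ), ∀ i j k, ψ (i, j, k) = b j * g (i, k)

def BiprodC {d₁ d₂ d₃ : ℕ} (ψ : TriH d₁ d₂ d₃) : Prop :=
  ∃ (c : Fin d₃ → ℂ) (g : Fin d₁ × Fin d₂ → ℂ), ∀ i j k, ψ (i, j, k) = c k * g (i, j)

def IsGME3 {d₁ d₂ d₃ : ℕ} (ψ : TriH d₁ d₂ d₃) : Prop :=
  ψ ≠ 0 ∧ ¬ BiprodA ψ ∧ ¬ BiprodB ψ ∧ ¬ BiprodC ψ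

def IsGES3 {d₁ d₂ d₃ : ℕ} (V : Submodule ℂ (TriH d₁ d₂ d₃)) : Prop :=
  ∀ ψ ∈ V, ψ ≠ 0 → IsGME3 ψ

def ket (i j k : Fin 2) : TriH 2 2 2 := WithLp.toLp 2 (fun p => if p = (i, j, k) then 1 else 0)

def G₁ : Submodule ℂ (TriH 2 2 2) :=
  Submodule.span ℂ
    {ket 0 0 1 - ket 0 1 0 - (2 : ℂ) • ket 0 1 1 - (2 : ℂ) • ket 1 1 0,
     ket 0 0 1 - ket 0 1 0 + (2 : ℂ) • ket 0 1 1 - (2 : ℂ) • ket 1 0 1,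
     ket 0 0 1 + ket 0 1 0 - ket 1 0 0}

def G₂ : Submodule ℂ (TriH 2 2 2) :=
  Submodule.span ℂ
    {ket 0 0 0 + ket 1 1 1,
     ket 0 0 1 + ket 0 1 0 + (2 : ℂ) • ket 1 0 0,
     ket 0 1 1 + ket 1 0 1 - ket 1 1 0}

def G₃ : Submodule ℂ (TriH 2 2 2) :=
  Submodule.span ℂ
    {ket 0 0 0 - ket 1 1 1,
     ket 0 0 1 - ket 0 1 0 + ket 1 0 1 + ket 1 1 0}

/-! ### Auxiliary definitions -/

def v₁ : TriH 2 2 2 := ket 0 0 1 - ket 0 1 0 - (2 : ℂ) • ket 0 1 1 - (2 : ℂ) • ket 1 1 0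
def v₂ : TriH 2 2 2 := ket 0 0 1 - ket 0 1 0 + (2 : ℂ) • ket 0 1 1 - (2 : ℂ) • ket 1 0 1
def v₃ : TriH 2 2 2 := ket 0 0 1 + ket 0 1 0 - ket 1 0 0
def w₁ : TriH 2 2 2 := ket 0 0 0 + ket 1 1 1
def w₂ : TriH 2 2 2 := ket 0 0 1 + ket 0 1 0 + (2 : ℂ) • ket 1 0 0
def w₃ : TriH 2 2 2 := ket 0 1 1 + ket 1 0 1 - ket 1 1 0
def u₁ : TriH 2 2 2 := ket 0 0 0 - ket 1 1 1
def u₂ : TriH 2 2 2 := ket 0 0 1 - ket 0 1 0 + ket 1 0 1 + ket 1 1 0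

lemma ket_apply (i j k : Fin 2) (p : Fin 2 × Fin 2 × Fin 2) :
    ket i j k p = if p = (i, j, k) then 1 else 0 := rfl

lemma G₁_eq : G₁ = Submodule.span ℂ {v₁, v₂, v₃} := rfl
lemma G₂_eq : G₂ = Submodule.span ℂ {w₁, w₂, w₃} := rfl
lemma G₃_eq : G₃ = Submodule.span ℂ {u₁, u₂} := rfl

lemma mem_span_triple' {M : Type*} [AddCommGroup M] [Module ℂ M] {x y z w : M}
    (h : w ∈ Submodule.span ℂ ({x, y, z} : Set M)) :
    ∃ α β γ : ℂ, w = α • x + β • y + γ • z := by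
  induction h using Submodule.span_induction with
  | mem u hu =>
    simp only [Set.mem_insert_iff, Set.mem_singleton_iff] at hu
    rcases hu with h | h | h
    · exact ⟨1, 0, 0, by simp [h]⟩
    · exact ⟨0, 1, 0, by simp [h]⟩
    · exact ⟨0, 0, 1, by simp [h]⟩
  | zero => exact ⟨0, 0, 0, by simp⟩
  | add u v _ _ hu hv =>
    obtain ⟨α, β, γ, rfl⟩ := hu
    obtain ⟨α', β', γ', rfl⟩ := hv
    exact ⟨α + α', β + β', γ + γ', by module⟩
  | smul c u _ hu =>
    obtain ⟨α, β, γ, rfl⟩ := hu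
    exact ⟨c * α, c * β, c * γ, by module⟩

lemma mem_span_pair' {M : Type*} [AddCommGroup M] [Module ℂ M] {x y w : M}
    (h : w ∈ Submodule.span ℂ ({x, y} : Set M)) :
    ∃ α β : ℂ, w = α • x + β • y := by
  obtain ⟨a, b, hab⟩ := Submodule.mem_span_pair.mp h
  exact ⟨a, b, hab.symm⟩

lemma keyA {ψ : TriH 2 2 2} (h : BiprodA ψ) (j k j' k' : Fin 2) :
    ψ (0, j, k) * ψ (1, j', k') = ψ (0, j', k') * ψ (1, j, k) := by
  obtain ⟨a, g, hg⟩ := h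
  simp only [hg]; ring

lemma keyB {ψ : TriH 2 2 2} (h : BiprodB ψ) (i k i' k' : Fin 2) :
    ψ (i, 0, k) * ψ (i', 1, k') = ψ (i', 0, k') * ψ (i, 1, k) := by
  obtain ⟨b, g, hg⟩ := h
  simp only [hg]; ring

lemma keyC {ψ : TriH 2 2 2} (h : BiprodC ψ) (i j i' j' : Fin 2) :
    ψ (i, j, 0) * ψ (i', j', 1) = ψ (i', j', 0) * ψ (i, j, 1) := by
  obtain ⟨c, g, hg⟩ := h
  simp only [hg]; ring

/-! ### G₁ is a GES -/

lemma solveG₁ {ψ : TriH 2 2 2} {α β γ : ℂ} (hψ : ψ = α • v₁ + β • v₂ + γ • v₃)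
    (h : BiprodA ψ ∨ BiprodB ψ ∨ BiprodC ψ) : ψ = 0 := by
  have h000 : ψ (0, 0, 0) = 0 := by rw [hψ]; simp (config := { decide := true }) [v₁, v₂, v₃, ket_apply]; try ring
  have h001 : ψ (0, 0, 1) = α + β + γ := by rw [hψ]; simp (config := { decide := true }) [v₁, v₂, v₃, ket_apply]; try ring
  have h010 : ψ (0, 1, 0) = -α - β + γ := by rw [hψ]; simp (config := { decide := true }) [v₁, v₂, v₃, ket_apply]; try ring
  have h011 : ψ (0, 1, 1) = -2 * α + 2 * β := by rw [hψ]; simp (config := { decide := true }) [v₁, v₂, v₃, ket_apply]; try ring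
  have h100 : ψ (1, 0, 0) = -γ := by rw [hψ]; simp (config := { decide := true }) [v₁, v₂, v₃, ket_apply]; try ring
  have h101 : ψ (1, 0, 1) = -2 * β := by rw [hψ]; simp (config := { decide := true }) [v₁, v₂, v₃, ket_apply]; try ring
  have h110 : ψ (1, 1, 0) = -2 * α := by rw [hψ]; simp (config := { decide := true }) [v₁, v₂, v₃, ket_apply]; try ring
  have h111 : ψ (1, 1, 1) = 0 := by rw [hψ]; simp (config := { decide := true }) [v₁, v₂, v₃, ket_apply]; try ring
  have hzero : α = 0 ∧ β = 0 ∧ γ = 0 := by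
    rcases h with h | h | h
    · -- BiprodA
      have E1 : γ * (α + β + γ) = 0 := by
        have t := keyA h 0 0 0 1
        rw [h000, h101, h001, h100] at t; linear_combination t
      have E4 : (α + β) ^ 2 + γ * (α - β) = 0 := by
        have t := keyA h 0 1 1 0
        rw [h001, h110, h010, h101] at t; linear_combination (-1/2 : ℂ) * t
      have E5 : β * (α - β) = 0 := by
        have t := keyA h 0 1 1 1
        rw [h001, h111, h011, h101] at t; linear_combination (-1/4 : ℂ) * t
      have E6 : α * (α - β) = 0 := by
        have t := keyA h 1 0 1 1
        rw [h010, h111, h011, h110] at t; linear_combination (-1/4 : ℂ) * t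
      by_cases hd : α = β
      · have hsq : (α + β) ^ 2 = 0 := by linear_combination E4 - γ * hd
        have hab : α + β = 0 := by exact sq_eq_zero_iff.mp hsq
        have hα : α = 0 := by linear_combination (hab + hd) / 2
        have hβ : β = 0 := by linear_combination (hab - hd) / 2
        have hγ : γ = 0 := by
          have : γ ^ 2 = 0 := by linear_combination E1 - γ * hα - γ * hβ
          exact sq_eq_zero_iff.mp this
        exact ⟨hα, hβ, hγ⟩
      · have hd' : α - β ≠ 0 := sub_ne_zero.mpr hd
        have hβ : β = 0 := by rcases mul_eq_zero.mp E5 with h' | h'; exact h'; exact absurd h' hd'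
        have hα : α = 0 := by rcases mul_eq_zero.mp E6 with h' | h'; exact h'; exact absurd h' hd'
        exact absurd (hα.trans hβ.symm) hd
    · -- BiprodB
      have F1 : (α + β + γ) * (γ - α - β) = 0 := by
        have t := keyB h 0 0 0 1
        rw [h000, h011, h001, h010] at t; linear_combination -t
      have F2 : γ * (γ - α - β) = 0 := by
        have t := keyB h 0 0 1 0
        rw [h000, h110, h100, h010] at t; linear_combination t
      have F3 : β * (γ - α - β) = 0 := by
        have t := keyB h 0 0 1 1
        rw [h000, h111, h101, h010] at t; linear_combination (1/2 : ℂ) * t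
      have F4 : α * (α + β + γ) + γ * (α - β) = 0 := by
        have t := keyB h 0 1 1 0
        rw [h001, h110, h100, h011] at t; linear_combination (-1/2 : ℂ) * t
      have F6 : α * β = 0 := by
        have t := keyB h 1 0 1 1
        rw [h100, h111, h101, h110] at t; linear_combination (-1/4 : ℂ) * t
      by_cases hg : γ - α - β = 0
      · rcases mul_eq_zero.mp F6 with hα | hβ
        · have hβ : β = 0 := by
            have : β ^ 2 = 0 := by linear_combination -F4 + (α + 2 * γ) * hα - β * hg
            exact sq_eq_zero_iff.mp this
          have hγ : γ = 0 := by linear_combination hg + hα + hβ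
          exact ⟨hα, hβ, hγ⟩
        · have hα : α = 0 := by
            have h3 : 3 * α ^ 2 = 0 := by linear_combination F4 + (γ - 3 * α) * hβ - 2 * α * hg
            have : α ^ 2 = 0 := by linear_combination h3 / 3
            exact sq_eq_zero_iff.mp this
          have hγ : γ = 0 := by linear_combination hg + hα + hβ
          exact ⟨hα, hβ, hγ⟩
      · have hs : α + β + γ = 0 :=
          (mul_eq_zero.mp F1).resolve_right hg
        have hγ : γ = 0 := (mul_eq_zero.mp F2).resolve_right hg
        have hβ : β = 0 := (mul_eq_zero.mp F3).resolve_right hg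
        have hα : α = 0 := by linear_combination hs - hβ - hγ
        exact absurd (by linear_combination hγ - hα - hβ) hg
    · -- BiprodC
      have H1 : (γ - α - β) * (α + β + γ) = 0 := by
        have t := keyC h 0 0 0 1
        rw [h000, h011, h010, h001] at t; linear_combination -t
      have H2 : γ * (α + β + γ) = 0 := by
        have t := keyC h 0 0 1 0
        rw [h000, h101, h100, h001] at t; linear_combination t
      have H3 : α * (α + β + γ) = 0 := by
        have t := keyC h 0 0 1 1
        rw [h000, h111, h110, h001] at t; linear_combination (1/2 : ℂ) * t
      have H4 : β * (γ - α - β) - γ * (β - α) = 0 := by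
        have t := keyC h 0 1 1 0
        rw [h010, h101, h100, h011] at t; linear_combination (-1/2 : ℂ) * t
      have H5 : α * (α - β) = 0 := by
        have t := keyC h 0 1 1 1
        rw [h010, h111, h110, h011] at t; linear_combination (-1/4 : ℂ) * t
      have H6 : α * β = 0 := by
        have t := keyC h 1 0 1 1
        rw [h100, h111, h110, h101] at t; linear_combination (-1/4 : ℂ) * t
      by_cases hs : α + β + γ = 0
      · rcases mul_eq_zero.mp H6 with hα | hβ
        · have hβ : β = 0 := by
            have : β ^ 2 = 0 := by linear_combination -H4 + (γ - β) * hα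
            exact sq_eq_zero_iff.mp this
          have hγ : γ = 0 := by linear_combination hs - hα - hβ
          exact ⟨hα, hβ, hγ⟩
        · have hα : α = 0 := by
            have : α ^ 2 = 0 := by linear_combination H5 + α * hβ
            exact sq_eq_zero_iff.mp this
          have hγ : γ = 0 := by linear_combination hs - hα - hβ
          exact ⟨hα, hβ, hγ⟩
      · have hg : γ - α - β = 0 := (mul_eq_zero.mp H1).resolve_right hs
        have hγ : γ = 0 := (mul_eq_zero.mp H2).resolve_right hs
        have hα : α = 0 := (mul_eq_zero.mp H3).resolve_right hs
        have hβ : β = 0 := by linear_combination hγ - hα - hg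
        exact absurd (by linear_combination hα + hβ + hγ) hs
  obtain ⟨hα, hβ, hγ⟩ := hzero
  rw [hψ, hα, hβ, hγ]; simp

/-! ### G₂ is a GES -/

lemma solveG₂ {ψ : TriH 2 2 2} {α β γ : ℂ} (hψ : ψ = α • w₁ + β • w₂ + γ • w₃)
    (h : BiprodA ψ ∨ BiprodB ψ ∨ BiprodC ψ) : ψ = 0 := by
  have h000 : ψ (0, 0, 0) = α := by rw [hψ]; simp (config := { decide := true }) [w₁, w₂, w₃, ket_apply]; try ring
  have h001 : ψ (0, 0, 1) = β := by rw [hψ]; simp (config := { decide := true }) [w₁, w₂, w₃, ket_apply]; try ring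
  have h010 : ψ (0, 1, 0) = β := by rw [hψ]; simp (config := { decide := true }) [w₁, w₂, w₃, ket_apply]; try ring
  have h011 : ψ (0, 1, 1) = γ := by rw [hψ]; simp (config := { decide := true }) [w₁, w₂, w₃, ket_apply]; try ring
  have h100 : ψ (1, 0, 0) = 2 * β := by rw [hψ]; simp (config := { decide := true }) [w₁, w₂, w₃, ket_apply]; try ring
  have h101 : ψ (1, 0, 1) = γ := by rw [hψ]; simp (config := { decide := true }) [w₁, w₂, w₃, ket_apply]; try ring
  have h110 : ψ (1, 1, 0) = -γ := by rw [hψ]; simp (config := { decide := true }) [w₁, w₂, w₃, ket_apply]; try ring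
  have h111 : ψ (1, 1, 1) = α := by rw [hψ]; simp (config := { decide := true }) [w₁, w₂, w₃, ket_apply]; try ring
  have hzero : α = 0 ∧ β = 0 ∧ γ = 0 := by
    rcases h with h | h | h
    · -- BiprodA
      have A1 : α * γ - 2 * β ^ 2 = 0 := by
        have t := keyA h 0 0 0 1
        rw [h000, h101, h001, h100] at t; linear_combination t
      have A2 : α * γ + 2 * β ^ 2 = 0 := by
        have t := keyA h 0 0 1 0
        rw [h000, h110, h010, h100] at t; linear_combination -t
      have hβ : β = 0 := by
        have : β ^ 2 = 0 := by linear_combination (A2 - A1) / 4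
        exact sq_eq_zero_iff.mp this
      have hγ : γ = 0 := by
        have t := keyA h 0 1 1 1
        rw [h001, h111, h011, h101] at t
        have : γ ^ 2 = 0 := by linear_combination -t + α * hβ
        exact sq_eq_zero_iff.mp this
      have hα : α = 0 := by
        have t := keyA h 0 0 1 1
        rw [h000, h111, h011, h100] at t
        have : α ^ 2 = 0 := by linear_combination t + 2 * γ * hβ
        exact sq_eq_zero_iff.mp this
      exact ⟨hα, hβ, hγ⟩
    · -- BiprodB
      have B1 : α * γ - β ^ 2 = 0 := by
        have t := keyB h 0 0 0 1
        rw [h000, h011, h001, h010] at t; linear_combination t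
      have B2 : α * γ + 2 * β ^ 2 = 0 := by
        have t := keyB h 0 0 1 0
        rw [h000, h110, h100, h010] at t; linear_combination -t
      have hβ : β = 0 := by
        have h3 : 3 * β ^ 2 = 0 := by linear_combination B2 - B1
        have : β ^ 2 = 0 := by linear_combination h3 / 3
        exact sq_eq_zero_iff.mp this
      have hγ : γ = 0 := by
        have t := keyB h 0 1 1 1
        rw [h001, h111, h101, h011] at t
        have : γ ^ 2 = 0 := by linear_combination -t + α * hβ
        exact sq_eq_zero_iff.mp this
      have hα : α = 0 := by
        have t := keyB h 0 0 1 1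
        rw [h000, h111, h101, h010] at t
        have : α ^ 2 = 0 := by linear_combination t + γ * hβ
        exact sq_eq_zero_iff.mp this
      exact ⟨hα, hβ, hγ⟩
    · -- BiprodC
      have C1 : α * γ - β ^ 2 = 0 := by
        have t := keyC h 0 0 0 1
        rw [h000, h011, h010, h001] at t; linear_combination t
      have C2 : α * γ - 2 * β ^ 2 = 0 := by
        have t := keyC h 0 0 1 0
        rw [h000, h101, h100, h001] at t; linear_combination t
      have hβ : β = 0 := by
        have : β ^ 2 = 0 := by linear_combination C1 - C2
        exact sq_eq_zero_iff.mp this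
      have hγ : γ = 0 := by
        have t := keyC h 0 1 1 1
        rw [h010, h111, h110, h011] at t
        have : γ ^ 2 = 0 := by linear_combination t - α * hβ
        exact sq_eq_zero_iff.mp this
      have hα : α = 0 := by
        have t := keyC h 0 0 1 1
        rw [h000, h111, h110, h001] at t
        have : α ^ 2 = 0 := by linear_combination t - γ * hβ
        exact sq_eq_zero_iff.mp this
      exact ⟨hα, hβ, hγ⟩
  obtain ⟨hα, hβ, hγ⟩ := hzero
  rw [hψ, hα, hβ, hγ]; simp

/-! ### G₃ is a GES -/

lemma solveG₃ {ψ : TriH 2 2 2} {α β : ℂ} (hψ : ψ = α • u₁ + β • u₂)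
    (h : BiprodA ψ ∨ BiprodB ψ ∨ BiprodC ψ) : ψ = 0 := by
  have h000 : ψ (0, 0, 0) = α := by rw [hψ]; simp (config := { decide := true }) [u₁, u₂, ket_apply]; try ring
  have h001 : ψ (0, 0, 1) = β := by rw [hψ]; simp (config := { decide := true }) [u₁, u₂, ket_apply]; try ring
  have h010 : ψ (0, 1, 0) = -β := by rw [hψ]; simp (config := { decide := true }) [u₁, u₂, ket_apply]; try ring
  have h011 : ψ (0, 1, 1) = 0 := by rw [hψ]; simp (config := { decide := true }) [u₁, u₂, ket_apply]; try ring
  have h100 : ψ (1, 0, 0) = 0 := by rw [hψ]; simp (config := { decide := true }) [u₁, u₂, ket_apply]; try ring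
  have h101 : ψ (1, 0, 1) = β := by rw [hψ]; simp (config := { decide := true }) [u₁, u₂, ket_apply]; try ring
  have h110 : ψ (1, 1, 0) = β := by rw [hψ]; simp (config := { decide := true }) [u₁, u₂, ket_apply]; try ring
  have h111 : ψ (1, 1, 1) = -α := by rw [hψ]; simp (config := { decide := true }) [u₁, u₂, ket_apply]; try ring
  have hzero : α = 0 ∧ β = 0 := by
    rcases h with h | h | h
    · -- BiprodA
      have hβ : β = 0 := by
        have t := keyA h 0 1 1 0
        rw [h001, h110, h010, h101] at t
        have : β ^ 2 = 0 := by linear_combination t / 2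
        exact sq_eq_zero_iff.mp this
      have hα : α = 0 := by
        have t := keyA h 0 0 1 1
        rw [h000, h111, h011, h100] at t
        have : α ^ 2 = 0 := by linear_combination -t
        exact sq_eq_zero_iff.mp this
      exact ⟨hα, hβ⟩
    · -- BiprodB
      have hβ : β = 0 := by
        have t := keyB h 0 0 0 1
        rw [h000, h011, h001, h010] at t
        have : β ^ 2 = 0 := by linear_combination t
        exact sq_eq_zero_iff.mp this
      have hα : α = 0 := by
        have t := keyB h 0 0 1 1
        rw [h000, h111, h101, h010] at t
        have : α ^ 2 = 0 := by linear_combination -t + β * hβ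
        exact sq_eq_zero_iff.mp this
      exact ⟨hα, hβ⟩
    · -- BiprodC
      have hβ : β = 0 := by
        have t := keyC h 0 0 0 1
        rw [h000, h011, h010, h001] at t
        have : β ^ 2 = 0 := by linear_combination t
        exact sq_eq_zero_iff.mp this
      have hα : α = 0 := by
        have t := keyC h 0 0 1 1
        rw [h000, h111, h110, h001] at t
        have : α ^ 2 = 0 := by linear_combination -t - β * hβ
        exact sq_eq_zero_iff.mp this
      exact ⟨hα, hβ⟩
  obtain ⟨hα, hβ⟩ := hzero
  rw [hψ, hα, hβ]; simp

lemma isGES_G₁ : IsGES3 G₁ := by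
  intro ψ hmem hne
  obtain ⟨α, β, γ, hψ⟩ := mem_span_triple' (G₁_eq ▸ hmem)
  exact ⟨hne, fun hb => hne (solveG₁ hψ (Or.inl hb)),
    fun hb => hne (solveG₁ hψ (Or.inr (Or.inl hb))),
    fun hb => hne (solveG₁ hψ (Or.inr (Or.inr hb)))⟩

lemma isGES_G₂ : IsGES3 G₂ := by
  intro ψ hmem hne
  obtain ⟨α, β, γ, hψ⟩ := mem_span_triple' (G₂_eq ▸ hmem)
  exact ⟨hne, fun hb => hne (solveG₂ hψ (Or.inl hb)),
    fun hb => hne (solveG₂ hψ (Or.inr (Or.inl hb))),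
    fun hb => hne (solveG₂ hψ (Or.inr (Or.inr hb)))⟩

lemma isGES_G₃ : IsGES3 G₃ := by
  intro ψ hmem hne
  obtain ⟨α, β, hψ⟩ := mem_span_pair' (G₃_eq ▸ hmem)
  exact ⟨hne, fun hb => hne (solveG₃ hψ (Or.inl hb)),
    fun hb => hne (solveG₃ hψ (Or.inr (Or.inl hb))),
    fun hb => hne (solveG₃ hψ (Or.inr (Or.inr hb)))⟩

/-! ### Orthogonality -/

lemma ortho₁₂ : G₁ ⟂ G₂ := by
  rw [G₁_eq, G₂_eq, Submodule.isOrtho_span]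
  rintro x hx y hy
  rcases hx with h | h | h <;> rcases hy with h' | h' | h' <;> subst h h' <;>
    simp (config := { decide := true }) [v₁, v₂, v₃, w₁, w₂, w₃, PiLp.inner_apply, Fintype.sum_prod_type,
      Fin.sum_univ_two, ket_apply, map_ofNat] <;> norm_num

lemma ortho₁₃ : G₁ ⟂ G₃ := by
  rw [G₁_eq, G₃_eq, Submodule.isOrtho_span]
  rintro x hx y hy
  rcases hx with h | h | h <;> rcases hy with h' | h' <;> subst h h' <;>
    simp (config := { decide := true }) [v₁, v₂, v₃, u₁, u₂, PiLp.inner_apply, Fintype.sum_prod_type,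
      Fin.sum_univ_two, ket_apply, map_ofNat] <;> norm_num

lemma ortho₂₃ : G₂ ⟂ G₃ := by
  rw [G₂_eq, G₃_eq, Submodule.isOrtho_span]
  rintro x hx y hy
  rcases hx with h | h | h <;> rcases hy with h' | h' <;> subst h h' <;>
    simp (config := { decide := true }) [w₁, w₂, w₃, u₁, u₂, PiLp.inner_apply, Fintype.sum_prod_type,
      Fin.sum_univ_two, ket_apply, map_ofNat] <;> norm_num

/-! ### Dimensions -/

lemma li_v : LinearIndependent ℂ ![v₁, v₂, v₃] := by
  rw [Fintype.linearIndependent_iff]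
  intro g hg
  rw [Fin.sum_univ_three] at hg
  simp only [Matrix.cons_val_zero, Matrix.cons_val_one, Matrix.head_cons,
    Matrix.cons_val_two, Matrix.tail_cons] at hg
  have e1 : (g 0 • v₁ + g 1 • v₂ + g 2 • v₃) ((1, 1, 0) : Fin 2 × Fin 2 × Fin 2) = 0 := by
    rw [hg]; rfl
  have e2 : (g 0 • v₁ + g 1 • v₂ + g 2 • v₃) ((1, 0, 1) : Fin 2 × Fin 2 × Fin 2) = 0 := by
    rw [hg]; rfl
  have e3 : (g 0 • v₁ + g 1 • v₂ + g 2 • v₃) ((1, 0, 0) : Fin 2 × Fin 2 × Fin 2) = 0 := by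
    rw [hg]; rfl
  simp (config := { decide := true }) [v₁, v₂, v₃, ket_apply] at e1 e2 e3
  intro i
  fin_cases i <;> simpa using by assumption

lemma li_w : LinearIndependent ℂ ![w₁, w₂, w₃] := by
  rw [Fintype.linearIndependent_iff]
  intro g hg
  rw [Fin.sum_univ_three] at hg
  simp only [Matrix.cons_val_zero, Matrix.cons_val_one, Matrix.head_cons,
    Matrix.cons_val_two, Matrix.tail_cons] at hg
  have e1 : (g 0 • w₁ + g 1 • w₂ + g 2 • w₃) ((0, 0, 0) : Fin 2 × Fin 2 × Fin 2) = 0 := by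
    rw [hg]; rfl
  have e2 : (g 0 • w₁ + g 1 • w₂ + g 2 • w₃) ((1, 0, 0) : Fin 2 × Fin 2 × Fin 2) = 0 := by
    rw [hg]; rfl
  have e3 : (g 0 • w₁ + g 1 • w₂ + g 2 • w₃) ((1, 1, 0) : Fin 2 × Fin 2 × Fin 2) = 0 := by
    rw [hg]; rfl
  simp (config := { decide := true }) [w₁, w₂, w₃, ket_apply] at e1 e2 e3
  intro i
  fin_cases i <;> simpa using by assumption

lemma li_u : LinearIndependent ℂ ![u₁, u₂] := by
  rw [Fintype.linearIndependent_iff]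
  intro g hg
  rw [Fin.sum_univ_two] at hg
  simp only [Matrix.cons_val_zero, Matrix.cons_val_one, Matrix.head_cons] at hg
  have e1 : (g 0 • u₁ + g 1 • u₂) ((0, 0, 0) : Fin 2 × Fin 2 × Fin 2) = 0 := by
    rw [hg]; rfl
  have e2 : (g 0 • u₁ + g 1 • u₂) ((0, 0, 1) : Fin 2 × Fin 2 × Fin 2) = 0 := by
    rw [hg]; rfl
  simp (config := { decide := true }) [u₁, u₂, ket_apply] at e1 e2
  intro i
  fin_cases i <;> simpa using by assumption

lemma rank_G₁ : Module.finrank ℂ G₁ = 3 := by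
  have hs : ({v₁, v₂, v₃} : Set (TriH 2 2 2)) = Set.range ![v₁, v₂, v₃] := by
    simp only [Matrix.range_cons, Matrix.range_empty, Set.union_empty, Set.union_singleton]
    ext x; simp [Set.mem_insert_iff]; tauto
  rw [G₁_eq, hs, finrank_span_eq_card li_v]
  rfl

lemma rank_G₂ : Module.finrank ℂ G₂ = 3 := by
  have hs : ({w₁, w₂, w₃} : Set (TriH 2 2 2)) = Set.range ![w₁, w₂, w₃] := by
    simp only [Matrix.range_cons, Matrix.range_empty, Set.union_empty, Set.union_singleton]
    ext x; simp [Set.mem_insert_iff]; tauto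
  rw [G₂_eq, hs, finrank_span_eq_card li_w]
  rfl

lemma rank_G₃ : Module.finrank ℂ G₃ = 2 := by
  have hs : ({u₁, u₂} : Set (TriH 2 2 2)) = Set.range ![u₁, u₂] := by
    simp only [Matrix.range_cons, Matrix.range_empty, Set.union_empty, Set.union_singleton]
    ext x; simp [Set.mem_insert_iff]; tauto
  rw [G₃_eq, hs, finrank_span_eq_card li_u]
  rfl

/-! ### Main theorem -/

/-- `G₁, G₂, G₃` are pairwise orthogonal subspaces of dimensions `3, 3, 2`;
each of them (in particular `G₃`) is a genuinely entangled subspace, and together they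
give an orthogonal decomposition of the whole three-qubit space. -/
theorem decomposition_into_GESs :
    (∀ x ∈ G₁, ∀ y ∈ G₂, (inner ℂ x y : ℂ) = 0) ∧
    (∀ x ∈ G₁, ∀ y ∈ G₃, (inner ℂ x y : ℂ) = 0) ∧
    (∀ x ∈ G₂, ∀ y ∈ G₃, (inner ℂ x y : ℂ) = 0) ∧
    Module.finrank ℂ G₁ = 3 ∧ Module.finrank ℂ G₂ = 3 ∧ Module.finrank ℂ G₃ = 2 ∧
    IsGES3 G₁ ∧ IsGES3 G₂ ∧ IsGES3 G₃ ∧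
    G₁ ⊔ G₂ ⊔ G₃ = ⊤ := by
  refine ⟨fun x hx y hy => ortho₁₂.inner_eq hx hy,
    fun x hx y hy => ortho₁₃.inner_eq hx hy,
    fun x hx y hy => ortho₂₃.inner_eq hx hy,
    rank_G₁, rank_G₂, rank_G₃, isGES_G₁, isGES_G₂, isGES_G₃, ?_⟩
  have hd12 : G₁ ⊓ G₂ = ⊥ := ortho₁₂.disjoint.eq_bot
  have o123 : (G₁ ⊔ G₂) ⟂ G₃ := Submodule.isOrtho_sup_left.mpr ⟨ortho₁₃, ortho₂₃⟩
  have hd123 : (G₁ ⊔ G₂) ⊓ G₃ = ⊥ := o123.disjoint.eq_bot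
  have h12 : Module.finrank ℂ ↥(G₁ ⊔ G₂) = 6 := by
    have := Submodule.finrank_sup_add_finrank_inf_eq G₁ G₂
    rw [hd12, rank_G₁, rank_G₂] at this
    simpa using this
  have h123 : Module.finrank ℂ ↥(G₁ ⊔ G₂ ⊔ G₃) = 8 := by
    have := Submodule.finrank_sup_add_finrank_inf_eq (G₁ ⊔ G₂) G₃
    rw [hd123, h12, rank_G₃] at this
    simpa using this
  apply Submodule.eq_top_of_finrank_eq
  rw [h123]
  have : Module.finrank ℂ (TriH 2 2 2) = 8 := by
    rw [finrank_euclideanSpace]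
    simp
  rw [this]
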